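/- Let c, γ, f0, τ0, Δ_d, Δ_v be positive reals. Define W_con = c/(2Δ_d), T_con = c/(2f0·Δ_v), S_con = W_con·T_con, the conventional error index σ²_{Z,con} = (3c²/(8π²γ))·(1/W_con² + τ0²/(f0²·T_con²)), and the optimized error index σ²_{Z,opt} = 3c²τ0/(4π²γ·f0·S_con). Then σ²_{Z,opt}/σ²_{Z,con} = 2τ0·(Δ_d/Δ_v) / (τ0² + (Δ_d/Δ_v)²); in particular σ²_{Z,opt} ≤ σ²_{Z,con}, with equality if and only if τ0 = Δ_d/Δ_v. -/

import Mathlib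

open Real

theorem stmt11 (c γ f0 τ0 Δd Δv : ℝ) (hc : 0 < c) (hγ : 0 < γ) (hf0 : 0 < f0)
    (hτ0 : 0 < τ0) (hΔd : 0 < Δd) (hΔv : 0 < Δv) :
    let Wcon : ℝ := c / (2 * Δd)
    let Tcon : ℝ := c / (2 * f0 * Δv)
    let Scon : ℝ := Wcon * Tcon
    let σZcon : ℝ := 3 * c ^ 2 / (8 * π ^ 2 * γ) *
      (1 / Wcon ^ 2 + τ0 ^ 2 / (f0 ^ 2 * Tcon ^ 2))
    let σZopt : ℝ := 3 * c ^ 2 * τ0 / (4 * π ^ 2 * γ * f0 * Scon)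
    σZopt / σZcon = 2 * τ0 * (Δd / Δv) / (τ0 ^ 2 + (Δd / Δv) ^ 2) ∧
    σZopt ≤ σZcon ∧
    (σZopt = σZcon ↔ τ0 = Δd / Δv) := by
  have hπ : (0:ℝ) < π := pi_pos
  intro Wcon Tcon Scon σZcon σZopt
  have hA : σZopt = 3 * τ0 * Δd * Δv / (π ^ 2 * γ) := by
    simp only [σZopt, Scon, Tcon, Wcon]
    field_simp
    ring
  have hB : σZcon = 3 * (Δd ^ 2 + τ0 ^ 2 * Δv ^ 2) / (2 * π ^ 2 * γ) := by
    simp only [σZcon, Tcon, Wcon]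
    field_simp
    ring
  have hden : (0:ℝ) < Δd ^ 2 + τ0 ^ 2 * Δv ^ 2 := by positivity
  have hden2 : (0:ℝ) < τ0 ^ 2 + (Δd / Δv) ^ 2 := by positivity
  refine ⟨?_, ?_, ?_⟩
  · rw [hA, hB]
    field_simp
    ring
  · rw [hA, hB]
    rw [div_le_div_iff₀ (by positivity) (by positivity)]
    nlinarith [mul_nonneg (mul_nonneg (sq_nonneg (Δd - τ0 * Δv)) (sq_nonneg π)) hγ.le]
  · rw [hA, hB]
    constructor
    · intro h
      rw [div_eq_div_iff (by positivity) (by positivity)] at h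
      have key : (Δd - τ0 * Δv) ^ 2 * (π ^ 2 * γ) = 0 := by linear_combination (-(1:ℝ)/3) * h
      have hpg : (0:ℝ) < π ^ 2 * γ := by positivity
      have hz : (Δd - τ0 * Δv) ^ 2 = 0 := by
        rcases mul_eq_zero.1 key with h' | h'
        · exact h'
        · exact absurd h' hpg.ne'
      have h2 : Δd = τ0 * Δv := by nlinarith [hz]
      field_simp [h2]
      linarith
    · intro h
      have h2 : Δd = τ0 * Δv := by field_simp at h; linarith
      rw [h2]; field_simp; ring
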